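/- arXiv:2210.05279 — 4 statements merged into one kernel-verified Lean document; each statement's English description precedes it below -/
import Mathlib

section
/- Let d ≥ 2, s2 ∈ ℕ with 2 ≤ s2 ≤ d, k* ≥ 1, κ ≥ 1, and q > 0. Define a := 16dκ²(s2−1)/(q(s2+2)(d−1)) and b := κ²[(8d/(q(s2+2)))((s2−1)(k*−1)/(d−1) + 3) + 9]. If there exists a real k > 0 satisfying k ≥ k*[(ak+b)² − (ak+b)], then q ≥ (16 d (s2−1) k* κ²/((s2+2)(d−1))) · [18κ² − 1 + 2√(9κ²(9κ²−1) + 1/2 − 1/(2k*) + (3/2)(d−1)/(k*(s2−1)))]. -/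
noncomputable section

/-- `a` constant of Remark 2 (case `s2 > 1`). -/
def remABound (d s2 : ℕ) (κ q : ℝ) : ℝ :=
  16 * (d : ℝ) * κ ^ 2 * ((s2 : ℝ) - 1) / (q * ((s2 : ℝ) + 2) * ((d : ℝ) - 1))

/-- `b` constant of Remark 2 (case `s2 > 1`). -/
def remBBound (d s2 kstar : ℕ) (κ q : ℝ) : ℝ :=
  κ ^ 2 * (8 * (d : ℝ) / (q * ((s2 : ℝ) + 2)) *
    (((s2 : ℝ) - 1) * ((kstar : ℝ) - 1) / ((d : ℝ) - 1) + 3) + 9)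

set_option maxHeartbeats 1000000 in
/-- Necessary condition on the number of random directions `q` for SZOHT, case `s2 > 1`
(Remark 2 of the paper): if some real `k > 0` satisfies `k ≥ k*[(ak+b)² − (ak+b)]`, then
`q ≥ (16 d (s2−1) k* κ²/((s2+2)(d−1))) · [18κ² − 1 +
  2√(9κ²(9κ²−1) + 1/2 − 1/(2k*) + (3/2)(d−1)/(k*(s2−1)))]`. -/

theorem q_necessary_condition_s2_gt_one (d s2 kstar : ℕ) (κ q : ℝ)
    (hd : 2 ≤ d) (hs2l : 2 ≤ s2) (hs2u : s2 ≤ d) (hkstar : 1 ≤ kstar)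
    (hκ : 1 ≤ κ) (hq : 0 < q)
    (hex : ∃ k : ℝ, 0 < k ∧
      k ≥ (kstar : ℝ) * ((remABound d s2 κ q * k + remBBound d s2 kstar κ q) ^ 2 -
        (remABound d s2 κ q * k + remBBound d s2 kstar κ q))) :
    q ≥ 16 * (d : ℝ) * ((s2 : ℝ) - 1) * (kstar : ℝ) * κ ^ 2 /
        (((s2 : ℝ) + 2) * ((d : ℝ) - 1)) *
      (18 * κ ^ 2 - 1 + 2 * Real.sqrt (9 * κ ^ 2 * (9 * κ ^ 2 - 1) + 1 / 2 -
        1 / (2 * (kstar : ℝ)) + 3 / 2 * ((d : ℝ) - 1) / ((kstar : ℝ) * ((s2 : ℝ) - 1)))) := by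
  obtain ⟨k, hk0, hk⟩ := hex
  have hD : (2:ℝ) ≤ (d:ℝ) := by exact_mod_cast hd
  have hS2 : (2:ℝ) ≤ (s2:ℝ) := by exact_mod_cast hs2l
  have hS2D : (s2:ℝ) ≤ (d:ℝ) := by exact_mod_cast hs2u
  have hK : (1:ℝ) ≤ (kstar:ℝ) := by exact_mod_cast hkstar
  have hK0 : (0:ℝ) < (kstar:ℝ) := by linarith
  have hD1 : (0:ℝ) < (d:ℝ) - 1 := by linarith
  have hS21 : (0:ℝ) < (s2:ℝ) - 1 := by linarith
  have hS22 : (0:ℝ) < (s2:ℝ) + 2 := by linarith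
  have hκ0 : (0:ℝ) < κ := by linarith
  have hκ2 : (1:ℝ) ≤ κ ^ 2 := by nlinarith
  obtain ⟨K, hKd⟩ : ∃ x : ℝ, x = (kstar:ℝ) := ⟨_, rfl⟩
  have hK1 : (1:ℝ) ≤ K := by rw [hKd]; exact hK
  obtain ⟨A, hAd⟩ : ∃ x : ℝ,
      x = 16 * (d:ℝ) * κ ^ 2 * ((s2:ℝ) - 1) / (((s2:ℝ) + 2) * ((d:ℝ) - 1)) := ⟨_, rfl⟩
  obtain ⟨B, hBd⟩ : ∃ x : ℝ,
      x = 8 * (d:ℝ) * κ ^ 2 * (((s2:ℝ) - 1) * (K - 1) / ((d:ℝ) - 1) + 3) / ((s2:ℝ) + 2) :=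
    ⟨_, rfl⟩
  obtain ⟨c, hcd⟩ : ∃ x : ℝ, x = 9 * κ ^ 2 := ⟨_, rfl⟩
  have hA0 : 0 < A := by rw [hAd]; positivity
  have hB0 : 0 < B := by
    rw [hBd]
    have h1 : 0 ≤ ((s2:ℝ) - 1) * (K - 1) / ((d:ℝ) - 1) :=
      div_nonneg (mul_nonneg (by linarith) (by linarith)) (by linarith)
    have h2 : 0 < 8 * (d:ℝ) * κ ^ 2 := by positivity
    exact div_pos (by nlinarith) hS22
  have hc0 : (9:ℝ) ≤ c := by rw [hcd]; nlinarith
  obtain ⟨a, had⟩ : ∃ x : ℝ, x = A / q := ⟨_, rfl⟩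
  obtain ⟨b, hbd⟩ : ∃ x : ℝ, x = B / q + c := ⟨_, rfl⟩
  have ha : remABound d s2 κ q = a := by
    rw [had, hAd]; unfold remABound; field_simp
  have hb : remBBound d s2 kstar κ q = b := by
    rw [hbd, hBd, hcd, hKd]; unfold remBBound; field_simp
  rw [ha, hb, ← hKd] at hk
  -- Step 1: discriminant nonneg
  have h2 : 0 ≤ K * a ^ 2 * (k - K * ((a * k + b) ^ 2 - (a * k + b))) := by
    have h3 : 0 ≤ k - K * ((a * k + b) ^ 2 - (a * k + b)) := by linarith
    have h4 : (0:ℝ) ≤ K := by linarith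
    positivity
  have hG : 0 ≤ (a * K + 1) ^ 2 - 4 * a * b * K * (a * K + 1) + 4 * a ^ 2 * b * K ^ 2 := by
    have hGid : (a * K + 1) ^ 2 - 4 * a * b * K * (a * K + 1) + 4 * a ^ 2 * b * K ^ 2 =
        (2 * K * a ^ 2 * k + 2 * K * a * b - K * a - 1) ^ 2 +
          4 * (K * a ^ 2 * (k - K * ((a * k + b) ^ 2 - (a * k + b)))) := by ring
    have hsq := sq_nonneg (2 * K * a ^ 2 * k + 2 * K * a * b - K * a - 1)
    rw [hGid]; linarith
  -- Step 2: quadratic inequality in q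
  have hQ : 0 ≤ q ^ 2 - 2 * (A * K * (2 * c - 1)) * q + A * K * (A * K - 4 * B) := by
    have hid : q ^ 2 - 2 * (A * K * (2 * c - 1)) * q + A * K * (A * K - 4 * B) =
        ((a * K + 1) ^ 2 - 4 * a * b * K * (a * K + 1) + 4 * a ^ 2 * b * K ^ 2) * q ^ 2 := by
      rw [had, hbd]; field_simp; ring
    rw [hid]; positivity
  -- Step 3: sqrt term
  obtain ⟨S, hSd⟩ : ∃ x : ℝ, x = 9 * κ ^ 2 * (9 * κ ^ 2 - 1) + 1 / 2 -
      1 / (2 * (kstar:ℝ)) + 3 / 2 * ((d:ℝ) - 1) / ((kstar:ℝ) * ((s2:ℝ) - 1)) := ⟨_, rfl⟩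
  have hS0 : 0 ≤ S := by
    rw [hSd]
    have h1 : 0 ≤ 1 / 2 - 1 / (2 * (kstar:ℝ)) := by
      rw [sub_nonneg, div_le_div_iff₀ (by linarith) (by norm_num)]; linarith
    have h3 : 0 ≤ 3 / 2 * ((d:ℝ) - 1) / ((kstar:ℝ) * ((s2:ℝ) - 1)) := by positivity
    nlinarith
  obtain ⟨T, hTd⟩ : ∃ x : ℝ, x = 2 * A * K * Real.sqrt S := ⟨_, rfl⟩
  have hT0 : 0 ≤ T := by
    rw [hTd]
    have : (0:ℝ) ≤ K := by linarith
    positivity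
  have hT2 : T ^ 2 = (A * K * (2 * c - 1)) ^ 2 - A * K * (A * K - 4 * B) := by
    have e1 : T ^ 2 = 4 * (A ^ 2 * K ^ 2) * S := by
      rw [hTd, mul_pow, Real.sq_sqrt hS0]; ring
    rw [e1, hSd, hAd, hBd, hcd, hKd]; field_simp; ring
  obtain ⟨M, hMd⟩ : ∃ x : ℝ, x = A * K * (2 * c - 1) := ⟨_, rfl⟩
  have hM0 : 0 ≤ M := by
    rw [hMd]
    have h1 : (0:ℝ) ≤ 2 * c - 1 := by linarith
    have h2 : (0:ℝ) ≤ K := by linarith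
    positivity
  -- Step 4: A*K ≤ 4*B
  have hAB : A * K ≤ 4 * B := by
    have h4B : 4 * B - A * K =
        16 * (d:ℝ) * κ ^ 2 * (((s2:ℝ) - 1) * (K - 2) + 6 * ((d:ℝ) - 1)) /
          (((s2:ℝ) + 2) * ((d:ℝ) - 1)) := by
      rw [hAd, hBd]; field_simp; ring
    have hp : 0 ≤ ((s2:ℝ) - 1) * (K - 1) := mul_nonneg (le_of_lt hS21) (by linarith)
    have hnum : 0 ≤ ((s2:ℝ) - 1) * (K - 2) + 6 * ((d:ℝ) - 1) := by nlinarith [hp]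
    have h5 : 0 ≤ 4 * B - A * K := by rw [h4B]; positivity
    linarith
  have hAK0 : 0 ≤ A * K := by positivity
  have hα : A * K * (A * K - 4 * B) ≤ 0 :=
    mul_nonpos_of_nonneg_of_nonpos hAK0 (by linarith)
  rw [← hMd] at hQ hT2
  obtain ⟨al, hald⟩ : ∃ x : ℝ, x = A * K * (A * K - 4 * B) := ⟨_, rfl⟩
  rw [← hald] at hQ hT2 hα
  have hMT : M ≤ T := by
    by_contra hcon
    push_neg at hcon
    have hTMpos : 0 < T + M := by linarith
    have h7 : (T - M) * (T + M) < 0 := mul_neg_of_neg_of_pos (by linarith) hTMpos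
    have h8 : (T - M) * (T + M) = T ^ 2 - M ^ 2 := by ring
    rw [h8, hT2] at h7
    linarith
  -- Step 5: conclude
  have hqMT : 0 < q - M + T := by linarith
  have hfinal : q ≥ M + T := by
    by_contra hcon
    push_neg at hcon
    have h7 : (q - M - T) * (q - M + T) < 0 := mul_neg_of_neg_of_pos (by linarith) hqMT
    have h8 : (q - M - T) * (q - M + T) = (q ^ 2 - 2 * M * q + al) + (M ^ 2 - al - T ^ 2) := by
      ring
    rw [h8] at h7
    linarith [hT2]
  have hgoal : 16 * (d:ℝ) * ((s2:ℝ) - 1) * (kstar:ℝ) * κ ^ 2 /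
      (((s2:ℝ) + 2) * ((d:ℝ) - 1)) * (18 * κ ^ 2 - 1 + 2 * Real.sqrt S) = M + T := by
    rw [hMd, hTd, hAd, hcd, hKd]; ring
  rw [← hSd, hgoal]
  exact hfinal

end
end

section
/- Let d ≥ 1, k* ≥ 1, κ ≥ 1, and q > 0. Define b := κ²(8d/q + 9). If there exists a real k with 0 < k ≤ d satisfying k ≥ k*·b·(b−1), then q ≥ 8κ²d/(√(d/k*) + 1). -/
/-- Necessary condition on the number of random directions `q` for SZOHT, case `s2 = 1`
(Remark 2 of the paper): with `b = κ²(8d/q + 9)`, if some real `k` with `0 < k ≤ d`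
satisfies `k ≥ k*·b·(b−1)`, then `q ≥ 8κ²d/(√(d/k*) + 1)`. -/
theorem q_necessary_condition_s2_eq_one (d kstar : ℕ) (κ q : ℝ)
    (hd : 1 ≤ d) (hkstar : 1 ≤ kstar) (hκ : 1 ≤ κ) (hq : 0 < q)
    (hex : ∃ k : ℝ, 0 < k ∧ k ≤ (d : ℝ) ∧
      k ≥ (kstar : ℝ) * (κ ^ 2 * (8 * (d : ℝ) / q + 9)) *
        (κ ^ 2 * (8 * (d : ℝ) / q + 9) - 1)) :
    q ≥ 8 * κ ^ 2 * (d : ℝ) / (Real.sqrt ((d : ℝ) / (kstar : ℝ)) + 1) := by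
  obtain ⟨k, hk0, hkd, hkb⟩ := hex
  have hd1 : (1:ℝ) ≤ d := by exact_mod_cast hd
  have hks1 : (1:ℝ) ≤ kstar := by exact_mod_cast hkstar
  have hκ2 : (1:ℝ) ≤ κ ^ 2 := by nlinarith
  have hdq : 0 < 8 * (d:ℝ) / q := by positivity
  set b := κ ^ 2 * (8 * (d : ℝ) / q + 9) with hb
  have hb9 : (9:ℝ) ≤ b := by nlinarith
  have hbb : b * (b - 1) ≤ (d:ℝ) / (kstar:ℝ) := by
    rw [le_div_iff₀ (by linarith)]
    nlinarith
  have hsq : (b - 1) ^ 2 ≤ (d:ℝ) / (kstar:ℝ) := by nlinarith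
  set s := Real.sqrt ((d:ℝ) / (kstar:ℝ)) with hs
  have hbs : b - 1 ≤ s := by
    have h1 : b - 1 = Real.sqrt ((b - 1) ^ 2) := (Real.sqrt_sq (by linarith)).symm
    rw [h1, hs]
    exact Real.sqrt_le_sqrt hsq
  have hs0 : 0 ≤ s := Real.sqrt_nonneg _
  rw [ge_iff_le, div_le_iff₀ (by linarith)]
  have hdiv : 8 * κ ^ 2 * (d:ℝ) / q ≤ b := by
    have h2 : 8 * κ ^ 2 * (d:ℝ) / q = κ ^ 2 * (8 * (d:ℝ) / q) := by ring
    rw [h2, hb]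
    nlinarith
  have h3 : 8 * κ ^ 2 * (d:ℝ) / q ≤ s + 1 := hdiv.trans (by linarith)
  have h4 := (div_le_iff₀ hq).mp h3
  linarith
end

section
/- Let ρ ∈ (0,1) and let k, k* be positive reals with k ≥ ρ²k*/(1−ρ²)². Define γ = √(1 + (k*/k + √((4 + k*/k)·(k*/k)))/2). Then γ² ≤ 1/ρ², and in particular ργ ≤ 1. -/
/-- If `k ≥ ρ²k*/(1-ρ²)²` then the hard-thresholding expansivity factor
`γ = √(1 + (k*/k + √((4 + k*/k)·(k*/k)))/2)` satisfies `γ² ≤ 1/ρ²`, hence `ργ ≤ 1`. -/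
theorem gamma_rho_le_one (ρ k kstar : ℝ) (hρ0 : 0 < ρ) (hρ1 : ρ < 1)
    (hk : 0 < k) (hkstar : 0 < kstar)
    (hklb : k ≥ ρ ^ 2 * kstar / (1 - ρ ^ 2) ^ 2) :
    (Real.sqrt (1 + (kstar / k + Real.sqrt ((4 + kstar / k) * (kstar / k))) / 2)) ^ 2 ≤
        1 / ρ ^ 2 ∧
      ρ * Real.sqrt (1 + (kstar / k + Real.sqrt ((4 + kstar / k) * (kstar / k))) / 2) ≤ 1 := by
  set r := kstar / k with hr_def
  have hρ2 : 0 < ρ ^ 2 := by positivity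
  have hρ2lt : ρ ^ 2 < 1 := by nlinarith
  have hr : 0 < r := by positivity
  have hrle : r * ρ ^ 2 ≤ (1 - ρ ^ 2) ^ 2 := by
    have h1 : (0:ℝ) < (1 - ρ ^ 2) ^ 2 := by nlinarith
    rw [ge_iff_le, div_le_iff₀ h1] at hklb
    rw [hr_def, div_mul_eq_mul_div, div_le_iff₀ hk]
    nlinarith
  set C := 2 * (1 - ρ ^ 2) / ρ ^ 2 with hC_def
  have hCρ : C * ρ ^ 2 = 2 * (1 - ρ ^ 2) := by
    rw [hC_def]; field_simp
  have hCr0 : 0 ≤ C - r := by nlinarith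
  have hkey : (4 + r) * r ≤ (C - r) ^ 2 := by nlinarith [sq_nonneg ρ, sq_nonneg (ρ^2), mul_pos hρ2 hρ2]
  have hsq : Real.sqrt ((4 + r) * r) ≤ C - r := by
    have := Real.sqrt_le_sqrt hkey
    rwa [Real.sqrt_sq hCr0] at this
  have hXle : 1 + (r + Real.sqrt ((4 + r) * r)) / 2 ≤ 1 / ρ ^ 2 := by
    have hC2 : 1 + C / 2 = 1 / ρ ^ 2 := by
      rw [hC_def]; field_simp; ring
    linarith
  have hX0 : 0 ≤ 1 + (r + Real.sqrt ((4 + r) * r)) / 2 := by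
    positivity
  have h1 : (Real.sqrt (1 + (r + Real.sqrt ((4 + r) * r)) / 2)) ^ 2 ≤ 1 / ρ ^ 2 := by
    rwa [Real.sq_sqrt hX0]
  refine ⟨h1, ?_⟩
  have hγ0 : 0 ≤ Real.sqrt (1 + (r + Real.sqrt ((4 + r) * r)) / 2) := Real.sqrt_nonneg _
  have h2 : (ρ * Real.sqrt (1 + (r + Real.sqrt ((4 + r) * r)) / 2)) ^ 2 ≤ 1 := by
    rw [mul_pow]
    calc ρ ^ 2 * (Real.sqrt (1 + (r + Real.sqrt ((4 + r) * r)) / 2)) ^ 2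
        ≤ ρ ^ 2 * (1 / ρ ^ 2) := mul_le_mul_of_nonneg_left h1 hρ2.le
      _ = 1 := by field_simp
  nlinarith [h2, mul_nonneg hρ0.le hγ0]
end

section
/- Let κ ≥ 1 and set ρ = √(1 − 2/(13κ²)) (so ρ ∈ (0,1)). Let k, k* be positive reals with k ≥ 2k*ρ²/(1−ρ²)², and define γ = √(1 + (k*/k + √((4 + k*/k)·(k*/k)))/2). Then ρ²γ² ≤ 1 − 1/(26κ²). -/
private lemma key_ineq (ε t s : ℝ) (hε0 : 0 < ε) (hε : ε ≤ 2 / 13) (ht : 0 < t)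
    (hts : 2 * (1 - ε) * t ≤ ε ^ 2) (hs0 : 0 ≤ s) (hs2 : s ^ 2 = (4 + t) * t) :
    (1 - ε) * (1 + (t + s) / 2) ≤ 1 - ε / 4 := by
  have hε1 : ε < 1 := by linarith
  have hA : 0 ≤ 3 * ε - 2 * (1 - ε) * t := by nlinarith
  have hx0 : 0 ≤ 2 * (1 - ε) * s := by nlinarith
  have hsq : (2 * (1 - ε) * s) ^ 2 ≤ (3 * ε - 2 * (1 - ε) * t) ^ 2 := by nlinarith
  have h1 : 2 * (1 - ε) * s ≤ 3 * ε - 2 * (1 - ε) * t :=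
    (pow_le_pow_iff_left₀ hx0 hA two_ne_zero).mp hsq
  nlinarith [h1]

/-- With `ρ = √(1 − 2/(13κ²))` and `k ≥ 2k*ρ²/(1−ρ²)²`, the contraction factor satisfies
`ρ²γ² ≤ 1 − 1/(26κ²)`. -/
theorem rho_sq_gamma_sq_bound (κ k kstar : ℝ) (hκ : 1 ≤ κ) (hk : 0 < k) (hkstar : 0 < kstar)
    (hklb : k ≥ 2 * kstar * (Real.sqrt (1 - 2 / (13 * κ ^ 2))) ^ 2 /
      (1 - (Real.sqrt (1 - 2 / (13 * κ ^ 2))) ^ 2) ^ 2) :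
    (Real.sqrt (1 - 2 / (13 * κ ^ 2))) ^ 2 *
        (Real.sqrt (1 + (kstar / k + Real.sqrt ((4 + kstar / k) * (kstar / k))) / 2)) ^ 2 ≤
      1 - 1 / (26 * κ ^ 2) := by
  have hκ2 : (1:ℝ) ≤ κ ^ 2 := by nlinarith
  have hκ2' : (0:ℝ) < κ ^ 2 := by linarith
  set ε : ℝ := 2 / (13 * κ ^ 2) with hεdef
  have hε0 : 0 < ε := by positivity
  have hε : ε ≤ 2 / 13 := by
    rw [hεdef, div_le_div_iff₀ (by positivity) (by norm_num)]
    nlinarith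
  have hrewr : 1 - 2 / (13 * κ ^ 2) = 1 - ε := rfl
  have hr0 : (0:ℝ) ≤ 1 - ε := by linarith
  have hρ2 : (Real.sqrt (1 - 2 / (13 * κ ^ 2))) ^ 2 = 1 - ε := by
    rw [hrewr, Real.sq_sqrt hr0]
  set t : ℝ := kstar / k with htdef
  have ht : 0 < t := div_pos hkstar hk
  set s : ℝ := Real.sqrt ((4 + t) * t) with hsdef
  have hs0 : 0 ≤ s := Real.sqrt_nonneg _
  have hs2 : s ^ 2 = (4 + t) * t := Real.sq_sqrt (by positivity)
  have hγ2 : (Real.sqrt (1 + (kstar / k + Real.sqrt ((4 + kstar / k) * (kstar / k))) / 2)) ^ 2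
      = 1 + (t + s) / 2 := by
    rw [← htdef, ← hsdef, Real.sq_sqrt (by positivity)]
  rw [hρ2, hγ2]
  rw [hρ2] at hklb
  have hε1 : ε < 1 := by
    have : (2:ℝ)/13 < 1 := by norm_num
    linarith
  have hklb' : k ≥ 2 * kstar * (1 - ε) / ε ^ 2 := by
    have h11 : 1 - (1 - ε) = ε := by ring
    rwa [h11] at hklb
  have hts : 2 * (1 - ε) * t ≤ ε ^ 2 := by
    have hkε : 2 * kstar * (1 - ε) ≤ k * ε ^ 2 := by
      rw [ge_iff_le, div_le_iff₀ (by positivity)] at hklb'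
      linarith
    have h1 : 2 * (1 - ε) * t = (2 * kstar * (1 - ε)) / k := by rw [htdef]; ring
    rw [h1, div_le_iff₀ hk]
    linarith
  have hfinal := key_ineq ε t s hε0 hε ht hts hs0 hs2
  have hgoal : 1 - 1 / (26 * κ ^ 2) = 1 - ε / 4 := by
    rw [hεdef]; ring
  rw [hgoal]
  exact hfinal
end
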